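/- arXiv:2011.14287 — 3 statements merged into one kernel-verified Lean document; each statement's English description precedes it below -/
import Mathlib

section
/- Let n ≥ 1, let ψ : ℝⁿ → ℂ be twice continuously differentiable on a neighbourhood of x ∈ ℝⁿ, and let ε > 0. Then the function ψ_ε(y) := √(|ψ(y)|² + ε²) is twice continuously differentiable near x and satisfies the pointwise regularised Kato inequality ψ_ε(x) · Δψ_ε(x) ≥ Re( conj(ψ(x)) · Δψ(x) ). -/
set_option maxHeartbeats 1000000

open Complex

/-- The Euclidean Laplacian `Δf(x) = ∑ i, ∂²f/∂x_i²(x)` (analyst's sign convention). -/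
noncomputable def eucLap {n : ℕ} {E : Type*} [NormedAddCommGroup E] [NormedSpace ℝ E]
    (f : EuclideanSpace ℝ (Fin n) → E) (x : EuclideanSpace ℝ (Fin n)) : E :=
  ∑ i : Fin n,
    fderiv ℝ (fun y => fderiv ℝ f y (EuclideanSpace.single i (1 : ℝ))) x
      (EuclideanSpace.single i (1 : ℝ))

theorem clm_second_deriv {E : Type*} [NormedAddCommGroup E] [NormedSpace ℝ E]
    (u : E → ℂ) (L : ℂ →L[ℝ] ℝ) (V : Set E) (hV : IsOpen V) (hu : ContDiffOn ℝ 2 u V)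
    (x : E) (hx : x ∈ V) (e : E) :
    fderiv ℝ (fun y => fderiv ℝ (fun z => L (u z)) y e) x e =
      L (fderiv ℝ (fun y => fderiv ℝ u y e) x e) := by
  have hu' : ∀ y ∈ V, DifferentiableAt ℝ u y := fun y hy =>
    (hu.contDiffAt (hV.mem_nhds hy)).differentiableAt (by norm_num)
  have h1 : ∀ y ∈ V, fderiv ℝ (fun z => L (u z)) y e = L (fderiv ℝ u y e) := by
    intro y hy
    have h := (L.hasFDerivAt.comp y (hu' y hy).hasFDerivAt).fderiv
    rw [show (fun z => L (u z)) = ⇑L ∘ u from rfl, h]; rfl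
  have hΨc : ContDiffAt ℝ 1 (fderiv ℝ u) x :=
    (hu.contDiffAt (hV.mem_nhds hx)).fderiv_right (by norm_num)
  have hΨ : DifferentiableAt ℝ (fun y => fderiv ℝ u y e) x :=
    (hΨc.clm_apply contDiffAt_const).differentiableAt one_ne_zero
  have h2 : fderiv ℝ (fun y => fderiv ℝ (fun z => L (u z)) y e) x =
      fderiv ℝ (fun y => L (fderiv ℝ u y e)) x :=
    Filter.EventuallyEq.fderiv_eq (Filter.eventuallyEq_of_mem (hV.mem_nhds hx) h1)
  rw [h2]
  have h := (L.hasFDerivAt.comp x hΨ.hasFDerivAt).fderiv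
  rw [show (fun y => L (fderiv ℝ u y e)) = ⇑L ∘ (fun y => fderiv ℝ u y e) from rfl, h]; rfl
theorem kato_dir {E : Type*} [NormedAddCommGroup E] [NormedSpace ℝ E]
    (a b : E → ℝ) (ε : ℝ) (hε : 0 < ε) (V : Set E) (hV : IsOpen V)
    (ha : ContDiffOn ℝ 2 a V) (hb : ContDiffOn ℝ 2 b V)
    (x : E) (hx : x ∈ V) (e : E) :
    a x * fderiv ℝ (fun y => fderiv ℝ a y e) x e + b x * fderiv ℝ (fun y => fderiv ℝ b y e) x e ≤
    Real.sqrt (a x ^ 2 + b x ^ 2 + ε ^ 2) *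
      fderiv ℝ (fun y => fderiv ℝ (fun z => Real.sqrt (a z ^ 2 + b z ^ 2 + ε ^ 2)) y e) x e := by
  set f : E → ℝ := fun z => Real.sqrt (a z ^ 2 + b z ^ 2 + ε ^ 2) with hf_def
  have hQ : ∀ y, 0 < a y ^ 2 + b y ^ 2 + ε ^ 2 := fun y => by positivity
  have hfpos : ∀ y, 0 < f y := fun y => Real.sqrt_pos.2 (hQ y)
  -- differentiability of a, b at points of V
  have haD : ∀ y ∈ V, DifferentiableAt ℝ a y := fun y hy =>
    (ha.contDiffAt (hV.mem_nhds hy)).differentiableAt (by norm_num)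
  have hbD : ∀ y ∈ V, DifferentiableAt ℝ b y := fun y hy =>
    (hb.contDiffAt (hV.mem_nhds hy)).differentiableAt (by norm_num)
  -- square rule
  have hsq : ∀ (u : E → ℝ) (Du : E →L[ℝ] ℝ) (y : E), HasFDerivAt u Du y →
      HasFDerivAt (fun z => u z ^ 2) ((2 * u y) • Du) y := fun u Du y hu => by
    simpa [Function.comp_def] using (hasDerivAt_pow 2 (u y)).comp_hasFDerivAt y hu
  -- derivative of f on V
  have hfder : ∀ y ∈ V, HasFDerivAt f
      ((1 / (2 * f y)) • ((2 * a y) • fderiv ℝ a y + (2 * b y) • fderiv ℝ b y)) y := by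
    intro y hy
    have hq' : HasFDerivAt (fun z => a z ^ 2 + b z ^ 2 + ε ^ 2)
        ((2 * a y) • fderiv ℝ a y + (2 * b y) • fderiv ℝ b y) y :=
      ((hsq a _ y (haD y hy).hasFDerivAt).add (hsq b _ y (hbD y hy).hasFDerivAt)).add_const _
    simpa [Function.comp_def, hf_def] using
      (Real.hasDerivAt_sqrt (hQ y).ne').comp_hasFDerivAt y hq'
  -- step 1 : formula for the first derivative on V
  have step1 : ∀ y ∈ V, fderiv ℝ f y e =
      (a y * fderiv ℝ a y e + b y * fderiv ℝ b y e) * (f y)⁻¹ := by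
    intro y hy
    rw [(hfder y hy).fderiv]
    simp only [ContinuousLinearMap.smul_apply, ContinuousLinearMap.add_apply, smul_eq_mul]
    have := (hfpos y).ne'
    field_simp
  -- second derivatives of a and b
  have hAc : ContDiffAt ℝ 1 (fun y => fderiv ℝ a y e) x :=
    ((ha.contDiffAt (hV.mem_nhds hx)).fderiv_right (by norm_num)).clm_apply contDiffAt_const
  have hBc : ContDiffAt ℝ 1 (fun y => fderiv ℝ b y e) x :=
    ((hb.contDiffAt (hV.mem_nhds hx)).fderiv_right (by norm_num)).clm_apply contDiffAt_const
  have hA : DifferentiableAt ℝ (fun y => fderiv ℝ a y e) x := hAc.differentiableAt one_ne_zero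
  have hB : DifferentiableAt ℝ (fun y => fderiv ℝ b y e) x := hBc.differentiableAt one_ne_zero
  -- derivative of G = N * f⁻¹ at x
  have hN : HasFDerivAt (fun y => a y * fderiv ℝ a y e + b y * fderiv ℝ b y e)
      ((a x • fderiv ℝ (fun y => fderiv ℝ a y e) x + fderiv ℝ a x e • fderiv ℝ a x) +
       (b x • fderiv ℝ (fun y => fderiv ℝ b y e) x + fderiv ℝ b x e • fderiv ℝ b x)) x :=
    (((haD x hx).hasFDerivAt.mul hA.hasFDerivAt).add
      ((hbD x hx).hasFDerivAt.mul hB.hasFDerivAt))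
  have hinv : HasFDerivAt (fun y => (f y)⁻¹)
      ((-(f x ^ 2)⁻¹) • ((1 / (2 * f x)) • ((2 * a x) • fderiv ℝ a x + (2 * b x) • fderiv ℝ b x))) x := by
    simpa [Function.comp_def] using (hasDerivAt_inv (hfpos x).ne').comp_hasFDerivAt x (hfder x hx)
  have hG : HasFDerivAt (fun y => (a y * fderiv ℝ a y e + b y * fderiv ℝ b y e) * (f y)⁻¹)
      ((a x * fderiv ℝ a x e + b x * fderiv ℝ b x e) •
        ((-(f x ^ 2)⁻¹) • ((1 / (2 * f x)) • ((2 * a x) • fderiv ℝ a x + (2 * b x) • fderiv ℝ b x)))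
       + (f x)⁻¹ •
        ((a x • fderiv ℝ (fun y => fderiv ℝ a y e) x + fderiv ℝ a x e • fderiv ℝ a x) +
         (b x • fderiv ℝ (fun y => fderiv ℝ b y e) x + fderiv ℝ b x e • fderiv ℝ b x))) x :=
    hN.mul hinv
  -- step 2: equality of second derivatives
  have step2 : fderiv ℝ (fun y => fderiv ℝ f y e) x =
      fderiv ℝ (fun y => (a y * fderiv ℝ a y e + b y * fderiv ℝ b y e) * (f y)⁻¹) x :=
    Filter.EventuallyEq.fderiv_eq (Filter.eventuallyEq_of_mem (hV.mem_nhds hx) step1)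
  rw [step2, hG.fderiv]
  simp only [ContinuousLinearMap.add_apply, ContinuousLinearMap.smul_apply, smul_eq_mul]
  -- now pure arithmetic
  set p := a x with hp; set r := b x with hr
  set P := fderiv ℝ a x e; set R := fderiv ℝ b x e
  set s2 := fderiv ℝ (fun y => fderiv ℝ a y e) x e
  set t2 := fderiv ℝ (fun y => fderiv ℝ b y e) x e
  set F0 := f x with hF0_def
  have hF0 : 0 < F0 := hfpos x
  have hF0sq : F0 ^ 2 = p ^ 2 + r ^ 2 + ε ^ 2 := Real.sq_sqrt (hQ x).le
  have hT : F0 * ((p * P + r * R) * (-(F0 ^ 2)⁻¹ * (1 / (2 * F0) * (2 * p * P + 2 * r * R)))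
      + (F0)⁻¹ * (p * s2 + P * P + (r * t2 + R * R)))
      = p * s2 + r * t2 + (P ^ 2 + R ^ 2 - (p * P + r * R) ^ 2 / F0 ^ 2) := by
    field_simp
    ring
  rw [show Real.sqrt (p ^ 2 + r ^ 2 + ε ^ 2) = F0 from rfl, hT]
  have hineq : (p * P + r * R) ^ 2 / F0 ^ 2 ≤ P ^ 2 + R ^ 2 := by
    rw [div_le_iff₀ (by positivity), hF0sq]
    nlinarith [sq_nonneg (p * R - r * P), sq_nonneg (ε * P), sq_nonneg (ε * R)]
  clear_value p r P R s2 t2 F0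
  linarith

theorem stmt_2 (n : ℕ) (hn : 1 ≤ n) (ψ : EuclideanSpace ℝ (Fin n) → ℂ)
    (x : EuclideanSpace ℝ (Fin n)) (U : Set (EuclideanSpace ℝ (Fin n)))
    (hU : U ∈ nhds x) (hψ : ContDiffOn ℝ 2 ψ U) (ε : ℝ) (hε : 0 < ε) :
    (∃ V ∈ nhds x, ContDiffOn ℝ 2 (fun y => Real.sqrt (‖ψ y‖ ^ 2 + ε ^ 2)) V) ∧
    Real.sqrt (‖ψ x‖ ^ 2 + ε ^ 2) *
        eucLap (fun y => Real.sqrt (‖ψ y‖ ^ 2 + ε ^ 2)) x ≥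
      ((starRingEnd ℂ) (ψ x) * eucLap ψ x).re := by
  set V : Set (EuclideanSpace ℝ (Fin n)) := interior U with hV_def
  have hVo : IsOpen V := isOpen_interior
  have hxV : x ∈ V := mem_interior_iff_mem_nhds.2 hU
  have hψV : ContDiffOn ℝ 2 ψ V := hψ.mono interior_subset
  set a : EuclideanSpace ℝ (Fin n) → ℝ := fun z => Complex.reCLM (ψ z) with ha_def
  set b : EuclideanSpace ℝ (Fin n) → ℝ := fun z => Complex.imCLM (ψ z) with hb_def
  have ha : ContDiffOn ℝ 2 a V := Complex.reCLM.contDiff.comp_contDiffOn hψV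
  have hb : ContDiffOn ℝ 2 b V := Complex.imCLM.contDiff.comp_contDiffOn hψV
  have hfun : (fun y => Real.sqrt (‖ψ y‖ ^ 2 + ε ^ 2)) =
      fun y => Real.sqrt (a y ^ 2 + b y ^ 2 + ε ^ 2) := by
    funext y
    congr 1
    simp [ha_def, hb_def, Complex.sq_norm, Complex.normSq_apply]
    ring
  have hQ : ∀ y, (0:ℝ) < a y ^ 2 + b y ^ 2 + ε ^ 2 := fun y => by positivity
  have hqC : ContDiffOn ℝ 2 (fun y => a y ^ 2 + b y ^ 2 + ε ^ 2) V :=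
    ((ha.pow 2).add (hb.pow 2)).add contDiffOn_const
  have hfC : ContDiffOn ℝ 2 (fun y => Real.sqrt (a y ^ 2 + b y ^ 2 + ε ^ 2)) V := by
    intro y hy
    exact ((Real.contDiffAt_sqrt (hQ y).ne').comp y
      (hqC.contDiffAt (hVo.mem_nhds hy))).contDiffWithinAt
  constructor
  · exact ⟨V, hVo.mem_nhds hxV, by rw [hfun]; exact hfC⟩
  · rw [hfun, show Real.sqrt (‖ψ x‖ ^ 2 + ε ^ 2)
        = Real.sqrt (a x ^ 2 + b x ^ 2 + ε ^ 2) by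
      congr 1; simp [ha_def, hb_def, Complex.sq_norm, Complex.normSq_apply]; ring]
    rw [ge_iff_le]
    unfold eucLap
    rw [Finset.mul_sum, Finset.mul_sum, Complex.re_sum]
    apply Finset.sum_le_sum
    intro i _
    set e := EuclideanSpace.single i (1:ℝ) with he
    set D2 := fderiv ℝ (fun y => fderiv ℝ ψ y e) x e with hD2
    have hre : fderiv ℝ (fun y => fderiv ℝ a y e) x e = D2.re := by
      rw [ha_def]
      rw [clm_second_deriv ψ Complex.reCLM V hVo hψV x hxV e]
      rfl
    have him : fderiv ℝ (fun y => fderiv ℝ b y e) x e = D2.im := by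
      rw [hb_def]
      rw [clm_second_deriv ψ Complex.imCLM V hVo hψV x hxV e]
      rfl
    have hmul : ((starRingEnd ℂ) (ψ x) * D2).re = a x * D2.re + b x * D2.im := by
      simp [ha_def, hb_def, Complex.mul_re]
    have key := kato_dir a b ε hε V hVo ha hb x hxV e
    rw [hre, him] at key
    rw [hmul]
    exact key
end

section
/- (Regularized spectral zeta function of Δ + 9/4 on S⁴.) For every s ∈ ℂ with Re(s) > 2, (1/6) · ∑_{k=1}^∞ (k+1)(k+2)(2k+3) / (k + 3/2)^{2s} = (1/3)·(2^{2s−3} − 1)·ζ_R(2s − 3) − (1/3)·(2^{2s−3} − 1/4)·ζ_R(2s − 1) − (1/3)·(2/3)^{2s−3} + (1/8)·(2/3)^{2s}, where the powers of positive reals are principal complex powers and the series converges absolutely. -/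
open Complex

lemma aux_sum {w : ℂ} (hw : 1 < w.re) : Summable (fun n : ℕ => (n:ℂ)^(-w)) := by
  have := Complex.summable_one_div_nat_cpow.mpr hw
  simpa [one_div, ← Complex.cpow_neg] using this

lemma aux_zeta {w : ℂ} (hw : 1 < w.re) : ∑' n : ℕ, (n:ℂ)^(-w) = riemannZeta w := by
  rw [zeta_eq_tsum_one_div_nat_cpow hw]
  simp [one_div, ← Complex.cpow_neg]

lemma aux_odd_summable {w : ℂ} (hw : 1 < w.re) :
    Summable (fun k : ℕ => ((2*(k:ℂ)+1))^(-w)) := by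
  have h := (aux_sum hw).comp_injective (i := fun k : ℕ => 2*k+1)
    (by intro a b h; simp only at h; omega)
  have heq : (fun k : ℕ => ((2*(k:ℂ)+1))^(-w)) = (fun n : ℕ => (n:ℂ)^(-w)) ∘ (fun k => 2*k+1) := by
    funext k
    show ((2*(k:ℂ)+1))^(-w) = ((2*k+1 : ℕ):ℂ)^(-w)
    push_cast; ring_nf
  rwa [heq]

lemma aux_odd_tsum {w : ℂ} (hw : 1 < w.re) :
    ∑' k : ℕ, ((2*(k:ℂ)+1))^(-w) = (1 - (2:ℂ)^(-w)) * riemannZeta w := by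
  have hf := aux_sum hw
  have heven : Summable (fun k : ℕ => (((2*k : ℕ)):ℂ)^(-w)) :=
    hf.comp_injective (i := fun k : ℕ => 2*k) (by intro a b h; simp only at h; omega)
  have hodd : Summable (fun k : ℕ => (((2*k+1 : ℕ)):ℂ)^(-w)) :=
    hf.comp_injective (i := fun k : ℕ => 2*k+1) (by intro a b h; simp only at h; omega)
  have hkey := tsum_even_add_odd (f := fun n : ℕ => (n:ℂ)^(-w)) heven hodd
  have heq : ∀ k : ℕ, ((2*k : ℕ):ℂ)^(-w) = (2:ℂ)^(-w) * ((k:ℕ):ℂ)^(-w) := by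
    intro k
    have h2 : ((2*k : ℕ):ℂ) = ((2:ℝ):ℂ) * ((k:ℝ):ℂ) := by push_cast; ring
    rw [h2, Complex.mul_cpow_ofReal_nonneg (by norm_num) (Nat.cast_nonneg k)]
    norm_num
  rw [tsum_congr heq, tsum_mul_left, aux_zeta hw] at hkey
  have h3 : ∑' k : ℕ, ((2*k+1 : ℕ):ℂ)^(-w) = ∑' k : ℕ, ((2*(k:ℂ)+1))^(-w) := by
    apply tsum_congr; intro k; push_cast; ring_nf
  rw [h3] at hkey
  linear_combination hkey

-- shifted version: sum over (2k+5)^{-w}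
lemma aux_shift_tsum {w : ℂ} (hw : 1 < w.re) :
    ∑' k : ℕ, ((2*(k:ℂ)+5))^(-w)
      = (1 - (2:ℂ)^(-w)) * riemannZeta w - 1 - (3:ℂ)^(-w) := by
  have hodd := aux_odd_summable hw
  have hkey := Summable.sum_add_tsum_nat_add (f := fun k : ℕ => ((2*(k:ℂ)+1))^(-w)) 2 hodd
  have h1 : ∑' k : ℕ, ((2*((k:ℂ)+2)+1))^(-w) = ∑' k : ℕ, ((2*(k:ℂ)+5))^(-w) := by
    apply tsum_congr; intro k; push_cast; ring_nf
  have h2 : (∑ i ∈ Finset.range 2, ((2*(i:ℂ)+1))^(-w)) = 1 + (3:ℂ)^(-w) := by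
    rw [Finset.sum_range_succ, Finset.sum_range_one]
    norm_num [Complex.one_cpow]
  rw [aux_odd_tsum hw] at hkey
  have h4 : ∑' k : ℕ, ((2*((k+2:ℕ):ℂ)+1))^(-w) = ∑' k : ℕ, ((2*(k:ℂ)+5))^(-w) := by
    apply tsum_congr; intro k; push_cast; ring_nf
  rw [h2, h4] at hkey
  linear_combination hkey

lemma aux_rsum {p : ℝ} (hp : 1 < p) : Summable (fun k : ℕ => ((k:ℝ)+5/2)^(-p)) := by
  have h0 : Summable (fun n : ℕ => 1/((n:ℝ))^p) := Real.summable_one_div_nat_rpow.mpr hp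
  have h1 : Summable (fun n : ℕ => 1/(((n+1:ℕ)):ℝ)^p) := (summable_nat_add_iff 1).mpr h0
  have h2 : Summable (fun n : ℕ => ((n:ℝ)+1)^(-p)) := by
    refine h1.congr fun n => ?_
    rw [Real.rpow_neg (by positivity), one_div]
    push_cast; ring_nf
  refine Summable.of_nonneg_of_le (fun k => by positivity) (fun k => ?_) h2
  exact Real.rpow_le_rpow_of_nonpos (by positivity) (by linarith [Nat.cast_nonneg (α := ℝ) k])
    (by linarith)

lemma aux_norm (k : ℕ) (w : ℂ) : ‖((k:ℂ)+5/2)^(-w)‖ = ((k:ℝ)+5/2)^(-w.re) := by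
  have h : (k:ℂ)+5/2 = (((k:ℝ)+5/2 : ℝ):ℂ) := by push_cast; ring
  rw [h, Complex.norm_cpow_eq_rpow_re_of_pos (by positivity), Complex.neg_re]

lemma aux_x_summable {w : ℂ} (hw : 1 < w.re) :
    Summable (fun k : ℕ => ‖((k:ℂ)+5/2)^(-w)‖) := by
  refine (aux_rsum hw).congr fun k => ?_
  rw [aux_norm]

lemma aux_x_tsum {w : ℂ} (hw : 1 < w.re) :
    ∑' k : ℕ, ((k:ℂ)+5/2)^(-w)
      = (2:ℂ)^w * ((1 - (2:ℂ)^(-w)) * riemannZeta w - 1 - (3:ℂ)^(-w)) := by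
  have hpt : ∀ k : ℕ, ((k:ℂ)+5/2)^(-w) = (2:ℂ)^w * ((2*(k:ℂ)+5))^(-w) := by
    intro k
    have h1 : (2*(k:ℂ)+5) = (((k:ℝ)+5/2 : ℝ):ℂ) * ((2:ℝ):ℂ) := by push_cast; ring
    have h2 : ((k:ℂ)+5/2) = (((k:ℝ)+5/2 : ℝ):ℂ) := by push_cast; ring
    rw [h1, h2, Complex.mul_cpow_ofReal_nonneg (by positivity) (by norm_num)]
    have h3 : ((2:ℝ):ℂ)^(-w) = ((2:ℂ)^w)⁻¹ := by
      norm_num [Complex.cpow_neg]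
    rw [h3]
    have h4 : (2:ℂ)^w ≠ 0 := by
      rw [Ne, Complex.cpow_eq_zero_iff]; norm_num
    field_simp
  rw [tsum_congr hpt, tsum_mul_left, aux_shift_tsum hw]

theorem stmt_14 (s : ℂ) (hs : 2 < s.re) :
    Summable (fun k : ℕ =>
      ‖(((k : ℂ) + 1 + 1) * ((k : ℂ) + 1 + 2) * (2 * ((k : ℂ) + 1) + 3)) /
        (((k : ℂ) + 1) + 3 / 2) ^ (2 * s)‖) ∧
    (1 / 6 : ℂ) * (∑' k : ℕ,
        (((k : ℂ) + 1 + 1) * ((k : ℂ) + 1 + 2) * (2 * ((k : ℂ) + 1) + 3)) /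
          (((k : ℂ) + 1) + 3 / 2) ^ (2 * s)) =
      (1 / 3 : ℂ) * ((2 : ℂ) ^ (2 * s - 3) - 1) * riemannZeta (2 * s - 3) -
        (1 / 3 : ℂ) * ((2 : ℂ) ^ (2 * s - 3) - 1 / 4) * riemannZeta (2 * s - 1) -
        (1 / 3 : ℂ) * ((2 : ℂ) / 3) ^ (2 * s - 3) +
        (1 / 8 : ℂ) * ((2 : ℂ) / 3) ^ (2 * s) := by
  have hw3 : 1 < (2*s-3).re := by
    have : (2*s-3).re = 2*s.re - 3 := by
      simp [Complex.sub_re, Complex.mul_re]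
    rw [this]; linarith
  have hw1 : 1 < (2*s-1).re := by
    have : (2*s-1).re = 2*s.re - 1 := by
      simp [Complex.sub_re, Complex.mul_re]
    rw [this]; linarith
  -- pointwise decomposition
  have hterm : ∀ k : ℕ,
      (((k : ℂ) + 1 + 1) * ((k : ℂ) + 1 + 2) * (2 * ((k : ℂ) + 1) + 3)) /
        (((k : ℂ) + 1) + 3 / 2) ^ (2 * s)
      = 2 * ((k:ℂ)+5/2)^(-(2*s-3)) - (1/2) * ((k:ℂ)+5/2)^(-(2*s-1)) := by
    intro k
    have hb : ((k : ℂ) + 1) + 3 / 2 = (k:ℂ)+5/2 := by ring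
    have hx0 : (k:ℂ)+5/2 ≠ 0 := by
      have hre : (0:ℝ) < ((k:ℂ)+5/2).re := by
        simp [Complex.add_re]
        positivity
      intro h; rw [h] at hre; simp at hre
    have h3 : ((k:ℂ)+5/2)^(-(2*s-3)) = ((k:ℂ)+5/2)^(3:ℕ) * (((k:ℂ)+5/2)^(2*s))⁻¹ := by
      rw [show -(2*s-3) = ((3:ℕ):ℂ) + -(2*s) by push_cast; ring,
        Complex.cpow_add _ _ hx0, Complex.cpow_natCast, Complex.cpow_neg]
    have h1 : ((k:ℂ)+5/2)^(-(2*s-1)) = ((k:ℂ)+5/2)^(1:ℕ) * (((k:ℂ)+5/2)^(2*s))⁻¹ := by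
      rw [show -(2*s-1) = ((1:ℕ):ℂ) + -(2*s) by push_cast; ring,
        Complex.cpow_add _ _ hx0, Complex.cpow_natCast, Complex.cpow_neg]
    rw [hb, h3, h1, div_eq_mul_inv]
    ring
  constructor
  · refine Summable.of_nonneg_of_le (fun k => norm_nonneg _) (fun k => ?_)
      (((aux_x_summable hw3).mul_left 2).add ((aux_x_summable hw1).mul_left (1/2)))
    rw [hterm k]
    calc ‖2 * ((k:ℂ)+5/2)^(-(2*s-3)) - (1/2) * ((k:ℂ)+5/2)^(-(2*s-1))‖
        ≤ ‖2 * ((k:ℂ)+5/2)^(-(2*s-3))‖ + ‖(1/2) * ((k:ℂ)+5/2)^(-(2*s-1))‖ := norm_sub_le _ _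
      _ = 2 * ‖((k:ℂ)+5/2)^(-(2*s-3))‖ + 1/2 * ‖((k:ℂ)+5/2)^(-(2*s-1))‖ := by
          rw [norm_mul, norm_mul]; norm_num
  · rw [tsum_congr hterm]
    have hs3 : Summable (fun k : ℕ => 2 * ((k:ℂ)+5/2)^(-(2*s-3))) :=
      ((aux_x_summable hw3).of_norm).mul_left 2
    have hs1 : Summable (fun k : ℕ => (1/2 : ℂ) * ((k:ℂ)+5/2)^(-(2*s-1))) :=
      ((aux_x_summable hw1).of_norm).mul_left (1/2)
    rw [Summable.tsum_sub hs3 hs1, tsum_mul_left, tsum_mul_left, aux_x_tsum hw3, aux_x_tsum hw1]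
    -- now pure algebra
    have ha : (2:ℂ)^(2*s-3) ≠ 0 := by
      rw [Ne, Complex.cpow_eq_zero_iff]; norm_num
    have h2a : (2:ℂ)^(2*s-1) = 4 * (2:ℂ)^(2*s-3) := by
      rw [show (2*s-1 : ℂ) = (2*s-3) + ((2:ℕ):ℂ) by push_cast; ring,
        Complex.cpow_add _ _ (by norm_num), Complex.cpow_natCast]
      ring
    have h2b : (2:ℂ)^(-(2*s-3)) = ((2:ℂ)^(2*s-3))⁻¹ := Complex.cpow_neg _ _
    have h2c : (2:ℂ)^(-(2*s-1)) = ((2:ℂ)^(2*s-3))⁻¹ / 4 := by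
      rw [Complex.cpow_neg, h2a, mul_inv]
      ring
    have h3a : (3:ℂ)^(-(2*s-1)) = (3:ℂ)^(-(2*s-3)) / 9 := by
      rw [show (-(2*s-1) : ℂ) = -(2*s-3) + -((2:ℕ):ℂ) by push_cast; ring,
        Complex.cpow_add _ _ (by norm_num), Complex.cpow_neg ((3:ℂ)) (((2:ℕ):ℂ)),
        Complex.cpow_natCast]
      norm_num
      ring
    have harg : (3:ℂ).arg ≠ Real.pi := by
      rw [show (3:ℂ) = (((3:ℝ)):ℂ) by norm_num, Complex.arg_ofReal_of_nonneg (by norm_num)]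
      exact Ne.symm Real.pi_ne_zero
    have h23a : ((2:ℂ)/3)^(2*s-3) = (2:ℂ)^(2*s-3) * (3:ℂ)^(-(2*s-3)) := by
      have hsplit : ((2:ℂ)/3) = (((2:ℝ)):ℂ) * ((((3:ℝ)⁻¹ : ℝ)):ℂ) := by push_cast; ring
      rw [hsplit, Complex.mul_cpow_ofReal_nonneg (by norm_num) (by norm_num),
        Complex.ofReal_inv, Complex.ofReal_ofNat, Complex.ofReal_ofNat,
        Complex.inv_cpow _ _ harg, ← Complex.cpow_neg]
    have h23b : ((2:ℂ)/3)^(2*s) = ((2:ℂ)/3)^(2*s-3) * (8/27) := by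
      rw [show (2*s : ℂ) = (2*s-3) + ((3:ℕ):ℂ) by push_cast; ring,
        Complex.cpow_add _ _ (by norm_num), Complex.cpow_natCast]
      ring
    rw [h2b, h2c, h3a, h2a, h23b, h23a]
    set a := (2:ℂ)^(2*s-3) with hadef
    set c := (3:ℂ)^(-(2*s-3)) with hcdef
    set z3 := riemannZeta (2*s-3) with hz3
    set z1 := riemannZeta (2*s-1) with hz1
    have hinv : a * a⁻¹ = 1 := mul_inv_cancel₀ ha
    field_simp
    ring
end

section
/- (Binomial expansion of the Hurwitz-type zeta series.) Let ρ be a real number with 0 < ρ < 1 and let w ∈ ℂ with Re(w) > 1. Then ∑_{k=1}^∞ (k + ρ)^{−w} = ∑_{m=0}^∞ (−1)^m · ( Γ(w+m) / (m! · Γ(w)) ) · ρ^m · ζ_R(w + m), where both series converge absolutely, ζ_R denotes the Riemann zeta function, Γ the complex Gamma function, and the powers of positive reals are principal complex powers. -/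
set_option maxHeartbeats 1000000

open Complex

private lemma aux_gamma_prod (w : ℂ) (hw : 1 < w.re) (m : ℕ) :
    Complex.Gamma (w + m) = (∏ j ∈ Finset.range m, (w + j)) * Complex.Gamma w := by
  induction m with
  | zero => simp
  | succ n ih =>
    have hne : w + (n : ℂ) ≠ 0 := by
      intro h
      have h2 : (w + (n : ℂ)).re = 0 := by rw [h]; simp
      simp only [Complex.add_re, Complex.natCast_re] at h2
      have : (0:ℝ) ≤ (n:ℝ) := Nat.cast_nonneg n
      linarith
    have hG : Complex.Gamma (w + n + 1) = (w + n) * Complex.Gamma (w + n) :=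
      Complex.Gamma_add_one _ hne
    have hcast : w + ((n + 1 : ℕ) : ℂ) = w + n + 1 := by push_cast; ring
    rw [hcast, hG, ih, Finset.prod_range_succ]
    ring

private lemma aux_iter_deriv (w : ℂ) (m : ℕ) :
    ∀ z ∈ Metric.ball (0:ℂ) 1,
      iteratedDeriv m (fun z : ℂ => (1 + z) ^ (-w)) z =
        (∏ j ∈ Finset.range m, -(w + j)) * (1 + z) ^ (-w - m) := by
  induction m with
  | zero =>
    intro z hz
    simp [iteratedDeriv_zero]
  | succ n ih =>
    intro z hz
    have hop : Metric.ball (0:ℂ) 1 ∈ nhds z := (Metric.isOpen_ball).mem_nhds hz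
    have heq : iteratedDeriv n (fun z : ℂ => (1 + z) ^ (-w)) =ᶠ[nhds z]
        fun z => (∏ j ∈ Finset.range n, -(w + j)) * (1 + z) ^ (-w - n) :=
      Filter.eventuallyEq_of_mem hop ih
    rw [iteratedDeriv_succ, heq.deriv_eq]
    have hsp : (1 + z) ∈ Complex.slitPlane := by
      refine Or.inl ?_
      have : |z.re| < 1 := lt_of_le_of_lt (Complex.abs_re_le_norm z) (by simpa using hz)
      simp only [Complex.add_re, Complex.one_re]
      cases abs_lt.mp this; linarith
    have hd : HasDerivAt (fun z : ℂ => (1 + z) ^ (-w - n))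
        ((-w - n) * (1 + z) ^ (-w - n - 1) * 1) z :=
      HasDerivAt.cpow_const ((hasDerivAt_id z).const_add 1) hsp
    rw [(hd.const_mul (∏ j ∈ Finset.range n, -(w + j))).deriv]
    have he : -w - (n:ℂ) - 1 = -w - ((n + 1 : ℕ) : ℂ) := by push_cast; ring
    rw [Finset.prod_range_succ, ← he]
    ring

private lemma aux_key (w : ℂ) (R : NNReal) (hR0 : 0 < R) (hR1 : (R:ℝ) < 1) :
    (∀ y : ℝ, 0 ≤ y → y < (R:ℝ) →
      HasSum (fun m : ℕ => ((∏ j ∈ Finset.range m, -(w + j)) / m.factorial) * (y:ℂ) ^ m)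
        (((1 + y : ℝ) : ℂ) ^ (-w))) ∧
    (∀ y : ℝ, 0 ≤ y → y < (R:ℝ) →
      Summable (fun m : ℕ =>
        ‖((∏ j ∈ Finset.range m, -(w + j)) / m.factorial) * (y:ℂ) ^ m‖)) := by
  set f : ℂ → ℂ := fun z => (1 + z) ^ (-w) with hf
  have hdiff : DifferentiableOn ℂ f (Metric.closedBall 0 R) := by
    intro z hz
    have hz1 : ‖z‖ < 1 := lt_of_le_of_lt (by simpa using hz) hR1
    have hsp : (1 + z) ∈ Complex.slitPlane := by
      refine Or.inl ?_
      have : |z.re| < 1 := lt_of_le_of_lt (Complex.abs_re_le_norm z) hz1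
      simp only [Complex.add_re, Complex.one_re]
      cases abs_lt.mp this; linarith
    exact (((differentiableAt_const (1:ℂ)).add differentiableAt_id).cpow
      (differentiableAt_const (-w)) hsp).differentiableWithinAt
  have hP : HasFPowerSeriesOnBall f (cauchyPowerSeries f 0 R) 0 R :=
    hdiff.hasFPowerSeriesOnBall hR0
  have hnn : ∀ y : ℝ, 0 ≤ y → y < (R:ℝ) → ‖(y:ℂ)‖₊ < R := by
    intro y hy hyR
    rw [← NNReal.coe_lt_coe]
    rw [show ((‖(y:ℂ)‖₊ : NNReal):ℝ) = |y| by simp [Complex.norm_real], _root_.abs_of_nonneg hy]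
    exact hyR
  have hterm : ∀ (y : ℝ), 0 ≤ y → ∀ m : ℕ,
      ((m.factorial : ℂ))⁻¹ • iteratedFDeriv ℂ m f 0 (fun _ => (y:ℂ)) =
        ((∏ j ∈ Finset.range m, -(w + j)) / m.factorial) * (y:ℂ) ^ m := by
    intro y hy m
    rw [iteratedFDeriv_apply_eq_iteratedDeriv_mul_prod,
      aux_iter_deriv w m 0 (by simp)]
    simp [smul_eq_mul, Finset.prod_const]
    ring
  constructor
  · intro y hy hyR
    have hmem : (y:ℂ) ∈ Metric.eball (0:ℂ) R := by
      rw [EMetric.mem_ball, edist_zero_right]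
      exact_mod_cast hnn y hy hyR
    have hs := hP.hasSum_iteratedFDeriv hmem
    simp only [zero_add] at hs
    have h2 : ((1 + y : ℝ) : ℂ) ^ (-w) = f (y:ℂ) := by
      simp only [hf, Complex.ofReal_add, Complex.ofReal_one]
    rw [h2, ← funext (hterm y hy)]
    exact hs
  · intro y hy hyR
    have h0 : (‖(y:ℂ)‖₊ : ENNReal) < (R : ENNReal) := by exact_mod_cast hnn y hy hyR
    have hrad : (y:ℂ) ∈ Metric.eball (0:ℂ) (cauchyPowerSeries f 0 R).radius := by
      rw [EMetric.mem_ball, edist_zero_right]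
      exact lt_of_lt_of_le h0 hP.r_le
    have hsum := (cauchyPowerSeries f 0 R).summable_norm_apply hrad
    refine hsum.congr fun m => ?_
    congr 1
    have h3 := hP.factorial_smul (y := (y:ℂ)) m
    have h4 : (cauchyPowerSeries f 0 R) m (fun _ => (y:ℂ)) =
        ((m.factorial : ℂ))⁻¹ • iteratedFDeriv ℂ m f 0 (fun _ => (y:ℂ)) := by
      rw [← h3, nsmul_eq_mul, smul_eq_mul, ← mul_assoc,
        inv_mul_cancel₀ (by exact_mod_cast m.factorial_ne_zero : (m.factorial:ℂ) ≠ 0), one_mul]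
    rw [h4, hterm y hy]

theorem stmt_15 (ρ : ℝ) (hρ0 : 0 < ρ) (hρ1 : ρ < 1) (w : ℂ) (hw : 1 < w.re) :
    Summable (fun k : ℕ => ‖(((k : ℂ) + 1) + (ρ : ℂ)) ^ (-w)‖) ∧
    Summable (fun m : ℕ =>
      ‖(-1 : ℂ) ^ m * (Complex.Gamma (w + m) / ((m.factorial : ℂ) * Complex.Gamma w)) *
        (ρ : ℂ) ^ m * riemannZeta (w + m)‖) ∧
    (∑' k : ℕ, (((k : ℂ) + 1) + (ρ : ℂ)) ^ (-w)) =
      ∑' m : ℕ, (-1 : ℂ) ^ m * (Complex.Gamma (w + m) / ((m.factorial : ℂ) * Complex.Gamma w)) *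
        (ρ : ℂ) ^ m * riemannZeta (w + m) := by
  -- setup
  set a : ℕ → ℂ := fun m => (∏ j ∈ Finset.range m, -(w + j)) / m.factorial with ha
  have hRpos : (0:ℝ) < (ρ + 1) / 2 := by linarith
  set R : NNReal := ⟨(ρ + 1) / 2, hRpos.le⟩ with hRdef
  have hR0 : 0 < R := by rw [← NNReal.coe_lt_coe]; exact hRpos
  have hR1 : (R:ℝ) < 1 := by show (ρ+1)/2 < 1; linarith
  have hρR : ρ < (R:ℝ) := by show ρ < (ρ+1)/2; linarith
  obtain ⟨key1, key2⟩ := aux_key w R hR0 hR1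
  -- summability of coefficients at ρ
  have Sρ : Summable (fun m : ℕ => ‖a m * (ρ:ℂ) ^ m‖) := key2 ρ hρ0.le hρR
  -- summability over k
  have hk : Summable (fun k : ℕ => ((k:ℝ) + 1) ^ (-w.re)) := by
    have h1 : Summable (fun n : ℕ => (n:ℝ) ^ (-w.re)) :=
      Real.summable_nat_rpow.mpr (by linarith)
    have h2 := h1.comp_injective Nat.succ_injective
    refine h2.congr fun n => ?_
    simp [Function.comp]
  -- norm computations
  have hbase : ∀ k : ℕ, ((k:ℂ) + 1) = (((k:ℝ) + 1 : ℝ) : ℂ) := by intro k; push_cast; ring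
  have hnormpow : ∀ (k : ℕ) (s : ℂ), ‖((k:ℂ) + 1) ^ s‖ = ((k:ℝ) + 1) ^ s.re := by
    intro k s
    rw [hbase k, Complex.norm_cpow_eq_rpow_re_of_pos (by positivity)]
  have hF1 : Summable (fun km : ℕ × ℕ =>
      ‖a km.2 * (ρ:ℂ) ^ km.2 * ((km.1:ℂ) + 1) ^ (-(w + km.2))‖) := by
    have hprod : Summable (fun km : ℕ × ℕ =>
        ((km.1:ℝ) + 1) ^ (-w.re) * ‖a km.2 * (ρ:ℂ) ^ km.2‖) :=
      hk.mul_of_nonneg Sρ (fun k => Real.rpow_nonneg (by positivity) _)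
        (fun m => norm_nonneg _)
    refine Summable.of_nonneg_of_le (fun _ => norm_nonneg _) (fun km => ?_) hprod
    rw [norm_mul, hnormpow]
    have hre : (-(w + (km.2:ℂ))).re = -w.re - km.2 := by simp; ring
    rw [hre, mul_comm]
    refine mul_le_mul_of_nonneg_right ?_ (norm_nonneg _)
    refine Real.rpow_le_rpow_of_exponent_le (by push_cast; linarith) ?_
    have : (0:ℝ) ≤ (km.2:ℝ) := Nat.cast_nonneg _
    linarith
  have hF : Summable (fun km : ℕ × ℕ =>
      a km.2 * (ρ:ℂ) ^ km.2 * ((km.1:ℂ) + 1) ^ (-(w + km.2))) := hF1.of_norm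
  -- per-k HasSum
  have hksum : ∀ k : ℕ, HasSum (fun m : ℕ => a m * (ρ:ℂ) ^ m * ((k:ℂ) + 1) ^ (-(w + m)))
      ((((k:ℂ) + 1) + ρ) ^ (-w)) := by
    intro k
    have hk1 : (0:ℝ) < (k:ℝ) + 1 := by positivity
    set y : ℝ := ρ / ((k:ℝ) + 1) with hy
    have hy0 : 0 ≤ y := by positivity
    have hyρ : y ≤ ρ := div_le_self hρ0.le (by linarith)
    have hyR : y < (R:ℝ) := lt_of_le_of_lt hyρ hρR
    have h1 := (key1 y hy0 hyR).mul_left (((k:ℂ) + 1) ^ (-w))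
    have hne : ((k:ℂ) + 1) ≠ 0 := by
      rw [hbase k]; exact_mod_cast (by positivity : ((k:ℝ) + 1) ≠ 0)
    have hterm : ∀ m : ℕ, ((k:ℂ) + 1) ^ (-w) * (a m * (y:ℂ) ^ m) =
        a m * (ρ:ℂ) ^ m * ((k:ℂ) + 1) ^ (-(w + m)) := by
      intro m
      have hyc : (y:ℂ) = (ρ:ℂ) / ((k:ℂ) + 1) := by rw [hy]; push_cast; ring
      have hexp : -(w + (m:ℂ)) = -w + (-(m:ℂ)) := by ring
      rw [hyc, div_pow, hexp, Complex.cpow_add _ _ hne,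
        show ((k:ℂ) + 1) ^ (-(m:ℂ)) = (((k:ℂ) + 1) ^ (m:ℂ))⁻¹ from Complex.cpow_neg _ _,
        Complex.cpow_natCast]
      have hpne : ((k:ℂ) + 1) ^ m ≠ 0 := pow_ne_zero _ hne
      field_simp
    have hval : ((k:ℂ) + 1) ^ (-w) * ((1 + y : ℝ) : ℂ) ^ (-w) = (((k:ℂ) + 1) + ρ) ^ (-w) := by
      have h2 : ((k:ℝ) + 1) * (1 + y) = (k:ℝ) + 1 + ρ := by
        rw [hy]; field_simp
      rw [hbase k, ← Complex.mul_cpow_ofReal_nonneg hk1.le (by linarith : (0:ℝ) ≤ 1 + y),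
        ← Complex.ofReal_mul, h2]
      push_cast
      rfl
    rw [← hval]
    exact (funext hterm) ▸ h1
  -- per-m HasSum over k (zeta)
  have hmsum : ∀ m : ℕ, HasSum (fun k : ℕ => ((k:ℂ) + 1) ^ (-(w + m))) (riemannZeta (w + m)) := by
    intro m
    have hs1 : 1 < (w + (m:ℂ)).re := by
      simp only [Complex.add_re, Complex.natCast_re]
      have : (0:ℝ) ≤ (m:ℝ) := Nat.cast_nonneg _
      linarith
    have hsm : Summable (fun k : ℕ => 1 / ((k:ℂ) + 1) ^ (w + m)) := by
      have h1 : Summable (fun n : ℕ => 1 / (n:ℂ) ^ (w + m)) :=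
        (Complex.summable_one_div_nat_cpow).mpr hs1
      have h2 := h1.comp_injective Nat.succ_injective
      refine h2.congr fun n => ?_
      simp [Function.comp]
    have hzeta : riemannZeta (w + m) = ∑' k : ℕ, 1 / ((k:ℂ) + 1) ^ (w + m) :=
      zeta_eq_tsum_one_div_nat_add_one_cpow hs1
    have h3 : HasSum (fun k : ℕ => 1 / ((k:ℂ) + 1) ^ (w + m)) (riemannZeta (w + m)) :=
      hsm.hasSum_iff.mpr hzeta.symm
    have ht : ∀ k : ℕ, 1 / ((k:ℂ) + 1) ^ (w + m) = ((k:ℂ) + 1) ^ (-(w + m)) := by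
      intro k; rw [Complex.cpow_neg, one_div]
    exact (funext ht) ▸ h3
  -- coefficient identity
  have hGw : Complex.Gamma w ≠ 0 := Complex.Gamma_ne_zero_of_re_pos (by linarith)
  have hco : ∀ m : ℕ, (-1:ℂ) ^ m *
      (Complex.Gamma (w + m) / ((m.factorial : ℂ) * Complex.Gamma w)) = a m := by
    intro m
    have hpn : ∏ j ∈ Finset.range m, -(w + (j:ℂ)) =
        (-1:ℂ) ^ m * ∏ j ∈ Finset.range m, (w + j) := by
      rw [show ((-1:ℂ)) ^ m = ∏ _j ∈ Finset.range m, (-1:ℂ) from by simp,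
        ← Finset.prod_mul_distrib]
      exact Finset.prod_congr rfl fun j _ => by ring
    have hfac : (m.factorial : ℂ) ≠ 0 := by exact_mod_cast m.factorial_ne_zero
    rw [aux_gamma_prod w hw m]
    simp only [ha]
    rw [hpn]
    field_simp
  have hmre : ∀ m : ℕ, (-(w + (m:ℂ))).re = -w.re - m := by
    intro m; simp; ring
  refine ⟨?_, ?_, ?_⟩
  · -- first summability
    refine Summable.of_nonneg_of_le (fun _ => norm_nonneg _) (fun k => ?_) hk
    have hb : ((k:ℂ) + 1 + ρ) = (((k:ℝ) + 1 + ρ : ℝ) : ℂ) := by push_cast; ring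
    rw [hb, Complex.norm_cpow_eq_rpow_re_of_pos (by positivity)]
    rw [show (-w).re = -w.re from by simp]
    exact Real.rpow_le_rpow_of_nonpos (by positivity) (by linarith) (by linarith)
  · -- second summability
    set B : ℝ := ∑' k : ℕ, ((k:ℝ) + 1) ^ (-w.re) with hB
    have hexple : ∀ m k : ℕ, ‖((k:ℂ) + 1) ^ (-(w + (m:ℂ)))‖ ≤ ((k:ℝ) + 1) ^ (-w.re) := by
      intro m k
      rw [hnormpow, hmre m]
      refine Real.rpow_le_rpow_of_exponent_le (by push_cast; linarith) ?_
      have : (0:ℝ) ≤ (m:ℝ) := Nat.cast_nonneg _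
      linarith
    have hknorm : ∀ m : ℕ, Summable (fun k : ℕ => ‖((k:ℂ) + 1) ^ (-(w + (m:ℂ)))‖) := by
      intro m
      exact Summable.of_nonneg_of_le (fun _ => norm_nonneg _) (fun k => hexple m k) hk
    have hζ : ∀ m : ℕ, ‖riemannZeta (w + m)‖ ≤ B := by
      intro m
      rw [← (hmsum m).tsum_eq]
      refine le_trans (norm_tsum_le_tsum_norm (hknorm m)) ?_
      exact Summable.tsum_le_tsum (fun k => hexple m k) (hknorm m) hk
    have hS2 : Summable (fun m : ℕ => ‖a m * (ρ:ℂ) ^ m‖ * B) := Sρ.mul_right B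
    refine Summable.of_nonneg_of_le (fun _ => norm_nonneg _) (fun m => ?_) hS2
    rw [show (-1:ℂ) ^ m * (Complex.Gamma (w + m) / ((m.factorial : ℂ) * Complex.Gamma w)) *
        (ρ:ℂ) ^ m * riemannZeta (w + m) = (a m * (ρ:ℂ) ^ m) * riemannZeta (w + m) from by
      rw [← hco m]]
    rw [norm_mul]
    exact mul_le_mul_of_nonneg_left (hζ m) (norm_nonneg _)
  · -- the equality
    calc (∑' k : ℕ, (((k:ℂ) + 1) + (ρ:ℂ)) ^ (-w))
        = ∑' (k : ℕ) (m : ℕ), a m * (ρ:ℂ) ^ m * ((k:ℂ) + 1) ^ (-(w + m)) :=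
          tsum_congr fun k => ((hksum k).tsum_eq).symm
      _ = ∑' (m : ℕ) (k : ℕ), a m * (ρ:ℂ) ^ m * ((k:ℂ) + 1) ^ (-(w + m)) :=
          (Summable.tsum_comm' (f := fun k m : ℕ => a m * (ρ:ℂ) ^ m * ((k:ℂ) + 1) ^ (-(w + m))) hF
            (fun k => (hksum k).summable)
            (fun m => ((hmsum m).mul_left (a m * (ρ:ℂ) ^ m)).summable)).symm
      _ = ∑' m : ℕ, a m * (ρ:ℂ) ^ m * riemannZeta (w + m) :=
          tsum_congr fun m => ((hmsum m).mul_left (a m * (ρ:ℂ) ^ m)).tsum_eq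
      _ = ∑' m : ℕ, (-1:ℂ) ^ m *
            (Complex.Gamma (w + m) / ((m.factorial : ℂ) * Complex.Gamma w)) *
            (ρ:ℂ) ^ m * riemannZeta (w + m) :=
          tsum_congr fun m => by rw [← hco m]
end
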